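/- arXiv:1701.04529 — 2 statements merged into one kernel-verified Lean document; each statement's English description precedes it below -/
import Mathlib

section
/- Let X be a finite set of points in ℝ², let Y ⊆ X, let d ≥ 1 and K ≥ 1 be integers, and suppose Y is contained in a Jordan curve with stabbing number at most d. Then for every set L of K affine lines in ℝ², each disjoint from X, some cell of L contains at least |Y|/(K·d) points of X. -/
open Set

/-- Points of the plane. -/
abbrev Pt := ℝ × ℝ

/-- An affine line in ℝ², given by a nontrivial linear equation. -/
def IsAffLine (l : Set Pt) : Prop :=
  ∃ a b c : ℝ, (a ≠ 0 ∨ b ≠ 0) ∧ l = {p : Pt | a * p.1 + b * p.2 = c}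

/-- An open half-plane in ℝ². -/
def IsOpenHalfPlane (H : Set Pt) : Prop :=
  ∃ a b c : ℝ, (a ≠ 0 ∨ b ≠ 0) ∧ H = {p : Pt | a * p.1 + b * p.2 < c}

/-- `A` and `B` are linearly separable: some affine line has `A` strictly on
one side and `B` strictly on the other side. -/
def LinSep (A B : Set Pt) : Prop :=
  ∃ a b c : ℝ, (a ≠ 0 ∨ b ≠ 0) ∧ (∀ p ∈ A, a * p.1 + b * p.2 < c) ∧
    (∀ p ∈ B, c < a * p.1 + b * p.2)

/-- General position: no three (distinct) points of `X` are collinear. -/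
def GenPos (X : Set Pt) : Prop :=
  ∀ p ∈ X, ∀ q ∈ X, ∀ r ∈ X, p ≠ q → p ≠ r → q ≠ r →
    ¬ Collinear ℝ ({p, q, r} : Set Pt)

/-- Convex position: no point of `X` lies in the convex hull of the others. -/
def ConvexPos (X : Set Pt) : Prop :=
  ∀ p ∈ X, p ∉ convexHull ℝ (X \ {p})

/-- A cell of an arrangement `L` of lines: a connected component of the
complement of the union of the lines. -/
def IsCell (L : Set (Set Pt)) (cell : Set Pt) : Prop :=
  ∃ p ∈ (⋃₀ L)ᶜ, cell = connectedComponentIn (⋃₀ L)ᶜ p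

/-- `S` has at most `d` connected components: among any `d + 1` points of `S`,
two lie in the same connected component of `S`. -/
def CompsLE (S : Set Pt) (d : ℕ) : Prop :=
  ∀ f : Fin (d + 1) → Pt, (∀ i, f i ∈ S) →
    ∃ i j, i ≠ j ∧ connectedComponentIn S (f i) = connectedComponentIn S (f j)

/-- A Jordan curve: the image of a continuous injective map from the unit
circle to the plane. -/
def IsJordanCurve (J : Set Pt) : Prop :=
  ∃ f : EuclideanSpace ℝ (Fin 2) → Pt,
    ContinuousOn f (Metric.sphere 0 1) ∧ Set.InjOn f (Metric.sphere 0 1) ∧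
      J = f '' (Metric.sphere 0 1)

/-- `J` has stabbing number at most `d` (a natural number): every affine line
meets `J` in at most `d` connected components. -/
def StabLE (J : Set Pt) (d : ℕ) : Prop :=
  ∀ l, IsAffLine l → CompsLE (J ∩ l) d

/-- `J` has stabbing number at most a real number `d`: every affine line meets
`J` in at most `⌊d⌋₊` connected components. -/
def StabLER (J : Set Pt) (d : ℝ) : Prop :=
  ∀ l, IsAffLine l → CompsLE (J ∩ l) ⌊d⌋₊

section Aux

abbrev E2 := EuclideanSpace ℝ (Fin 2)

noncomputable def Zc (v : E2) : ℂ := ⟨v 0, v 1⟩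

noncomputable def qc (θ : ℝ) : E2 := WithLp.toLp 2 (fun i => if i = 0 then Real.cos θ else Real.sin θ)

lemma coord_cont (i : Fin 2) : Continuous (fun v : E2 => v i) := by
  have h : Continuous (fun v : E2 => (EuclideanSpace.equiv (Fin 2) ℝ) v i) :=
    (continuous_apply i).comp (EuclideanSpace.equiv (Fin 2) ℝ).continuous
  exact h

lemma Zc_cont : Continuous Zc := by
  have : Zc = fun v : E2 => (v 0 : ℂ) + (v 1 : ℂ) * Complex.I := by
    funext v; apply Complex.ext <;> simp [Zc]
  rw [this]
  exact ((Complex.continuous_ofReal.comp (coord_cont 0)).add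
    ((Complex.continuous_ofReal.comp (coord_cont 1)).mul continuous_const))

lemma abs_Zc {v : E2} (hv : v ∈ Metric.sphere (0:E2) 1) : ‖Zc v‖ = 1 := by
  simp only [Metric.mem_sphere, dist_zero_right, EuclideanSpace.norm_eq] at hv
  rw [Fin.sum_univ_two] at hv
  rw [Complex.norm_def, Complex.normSq_apply]
  have h2 : Real.sqrt (v 0 ^ 2 + v 1 ^ 2) = 1 := by simpa using hv
  have := congrArg (· ^ 2) h2
  simp only [one_pow] at this
  rw [Real.sq_sqrt (by positivity)] at this
  show Real.sqrt (v 0 * v 0 + v 1 * v 1) = 1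
  rw [show v 0 * v 0 + v 1 * v 1 = v 0 ^2 + v 1 ^ 2 by ring, this, Real.sqrt_one]

lemma Zc_qc (θ : ℝ) : Zc (qc θ) = Complex.exp (θ * Complex.I) := by
  rw [Complex.exp_mul_I]
  apply Complex.ext <;>
    simp [Zc, qc, Complex.cos_ofReal_re, Complex.sin_ofReal_re, Complex.cos_ofReal_im,
      Complex.sin_ofReal_im]

lemma qc_cont : Continuous qc := by
  have h : Continuous (fun θ => (EuclideanSpace.equiv (Fin 2) ℝ).symm
      (fun i => if i = 0 then Real.cos θ else Real.sin θ)) := by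
    apply (EuclideanSpace.equiv (Fin 2) ℝ).symm.continuous.comp
    apply continuous_pi
    intro i
    by_cases hi : i = 0 <;> simp [hi] <;> fun_prop
  exact h

lemma Zc_inj : Function.Injective Zc := by
  intro v w h
  ext i
  fin_cases i
  · exact congrArg Complex.re h
  · exact congrArg Complex.im h

lemma qc_mem_sphere (θ : ℝ) : qc θ ∈ Metric.sphere (0:E2) 1 := by
  simp only [Metric.mem_sphere, dist_zero_right, EuclideanSpace.norm_eq]
  simp [qc, Fin.sum_univ_two]

noncomputable def wB (β : ℝ) (v : E2) : ℂ := -(Complex.exp (-(β:ℂ) * Complex.I)) * Zc v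

noncomputable def argB (β : ℝ) (v : E2) : ℝ := β + Real.pi + Complex.arg (wB β v)

lemma neg_exp_eq (x : ℂ) : -(Complex.exp x) = Complex.exp (x + Real.pi * Complex.I) := by
  rw [Complex.exp_add, Complex.exp_pi_mul_I]; ring

lemma wB_qc (β s : ℝ) : wB β (qc s) = Complex.exp ((((s - β + Real.pi : ℝ)) : ℂ) * Complex.I) := by
  rw [wB, Zc_qc, neg_exp_eq, ← Complex.exp_add]
  congr 1
  push_cast
  ring

lemma argB_qc {β s : ℝ} (h1 : β < s) (h2 : s < β + 2 * Real.pi) : argB β (qc s) = s := by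
  have key : wB β (qc s) = Complex.exp ((((s - β - Real.pi : ℝ)) : ℂ) * Complex.I) := by
    rw [wB_qc]
    rw [show (((s - β + Real.pi : ℝ)) : ℂ) * Complex.I
      = (((s - β - Real.pi : ℝ)) : ℂ) * Complex.I + 2 * Real.pi * Complex.I by push_cast; ring]
    rw [Complex.exp_add, Complex.exp_two_pi_mul_I, mul_one]
  rw [argB, key, Complex.exp_mul_I, Complex.arg_cos_add_sin_mul_I]
  · ring
  · constructor <;> [linarith [Real.pi_pos]; linarith]

lemma Zv_eq_exp_argB {β : ℝ} {v : E2} (hv : v ∈ Metric.sphere (0:E2) 1) :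
    Zc v = Complex.exp (((argB β v : ℝ) : ℂ) * Complex.I) := by
  have habs : ‖wB β v‖ = 1 := by
    rw [wB, norm_mul, norm_neg, Complex.norm_exp]
    simp [abs_Zc hv]
  have hrec : wB β v = Complex.exp ((Complex.arg (wB β v) : ℂ) * Complex.I) := by
    conv_lhs => rw [← Complex.norm_mul_exp_arg_mul_I (wB β v)]
    rw [habs]; simp
  have h2 : Zc v = -(Complex.exp ((β:ℂ) * Complex.I)) * wB β v := by
    rw [wB, ← mul_assoc, neg_mul_neg, ← Complex.exp_add]
    rw [show (β:ℂ) * Complex.I + -(β:ℂ) * Complex.I = 0 by ring, Complex.exp_zero, one_mul]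
  rw [h2, hrec, neg_exp_eq, ← Complex.exp_add]
  congr 1
  rw [argB]
  push_cast
  ring

lemma qc_argB {β : ℝ} {v : E2} (hv : v ∈ Metric.sphere (0:E2) 1) : qc (argB β v) = v := by
  apply Zc_inj
  rw [Zc_qc]
  exact (Zv_eq_exp_argB hv).symm

lemma argB_contOn (β : ℝ) :
    ContinuousOn (argB β) (Metric.sphere (0:E2) 1 \ {qc β}) := by
  intro v hv
  apply ContinuousAt.continuousWithinAt
  have hcw : Continuous (wB β) := continuous_const.mul Zc_cont
  have habs : ‖wB β v‖ = 1 := by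
    rw [wB, norm_mul, norm_neg, Complex.norm_exp]
    simp [abs_Zc hv.1]
  have hwne : wB β v ≠ -1 := by
    intro hcon
    have h2 : Zc v = -(Complex.exp ((β:ℂ) * Complex.I)) * wB β v := by
      rw [wB, ← mul_assoc, neg_mul_neg, ← Complex.exp_add]
      rw [show (β:ℂ) * Complex.I + -(β:ℂ) * Complex.I = 0 by ring, Complex.exp_zero, one_mul]
    have hZ : Zc v = Complex.exp ((β:ℂ) * Complex.I) := by rw [h2, hcon]; ring
    exact hv.2 (Zc_inj (by rw [hZ, Zc_qc]))
  have harg : 0 < (wB β v).re ∨ (wB β v).im ≠ 0 := by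
    by_contra hcon
    push_neg at hcon
    obtain ⟨h1, h2⟩ := hcon
    have hre : (wB β v).re = -1 := by
      have := Complex.sq_norm (wB β v)
      rw [habs, Complex.normSq_apply, h2] at this
      nlinarith
    exact hwne (Complex.ext hre (by simp [h2]))
  have hc2 : ContinuousAt (Complex.arg ∘ wB β) v :=
    (Complex.continuousAt_arg harg).comp hcw.continuousAt
  exact continuousAt_const.add hc2

lemma circle_sep {B : Set E2} (hB : IsPreconnected B) (hBs : B ⊆ Metric.sphere (0:E2) 1)
    {β s₁ γ s₂ : ℝ} (h1 : β < s₁) (h2 : s₁ < γ) (h3 : γ < s₂) (h4 : s₂ < β + 2 * Real.pi)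
    (hs1 : qc s₁ ∈ B) (hs2 : qc s₂ ∈ B) (hβ : qc β ∉ B) : qc γ ∈ B := by
  have hBs' : B ⊆ Metric.sphere (0:E2) 1 \ {qc β} := fun x hx =>
    ⟨hBs hx, fun hxx => hβ (by rwa [← hxx])⟩
  have hA : IsPreconnected (argB β '' B) :=
    hB.image _ ((argB_contOn β).mono hBs')
  have hoc : (argB β '' B).OrdConnected := hA.ordConnected
  have hm1 : s₁ ∈ argB β '' B := ⟨qc s₁, hs1, argB_qc h1 (by linarith)⟩
  have hm2 : s₂ ∈ argB β '' B := ⟨qc s₂, hs2, argB_qc (by linarith) h4⟩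
  have hγ : γ ∈ argB β '' B := hoc.out hm1 hm2 ⟨le_of_lt h2, le_of_lt h3⟩
  obtain ⟨v, hvB, hvγ⟩ := hγ
  have : qc γ = v := by rw [← hvγ, qc_argB (hBs hvB)]
  rwa [this]

lemma jordan_preimage {f : E2 → Pt} (hfc : ContinuousOn f (Metric.sphere (0:E2) 1))
    (hfi : Set.InjOn f (Metric.sphere (0:E2) 1)) {C : Set Pt} (hC : IsPreconnected C)
    (hCJ : C ⊆ f '' (Metric.sphere (0:E2) 1)) :
    IsPreconnected (Metric.sphere (0:E2) 1 ∩ f ⁻¹' C) := by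
  set S : Set E2 := Metric.sphere (0:E2) 1 with hS
  set J : Set Pt := f '' S with hJdef
  have hcs : IsCompact S := isCompact_sphere _ _
  haveI : CompactSpace S := isCompact_iff_compactSpace.mp hcs
  let F : S → J := fun x => ⟨f x, ⟨x, x.2, rfl⟩⟩
  have hFc : Continuous F := Continuous.subtype_mk (hfc.restrict) _
  have hFbij : Function.Bijective F := by
    constructor
    · intro a b hab
      exact Subtype.ext (hfi a.2 b.2 (congrArg Subtype.val hab))
    · rintro ⟨z, ⟨x, hx, rfl⟩⟩
      exact ⟨⟨x, hx⟩, rfl⟩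
  let E : S ≃ J := Equiv.ofBijective F hFbij
  have hEc : Continuous E := hFc
  let H : S ≃ₜ J := hEc.homeoOfEquivCompactToT2
  -- C' : subset of J
  let C' : Set J := Subtype.val ⁻¹' C
  have hCval : Subtype.val '' C' = C := by
    rw [Subtype.image_preimage_coe]
    exact inter_eq_self_of_subset_right hCJ
  have hC' : IsPreconnected C' := by
    rw [← Topology.IsInducing.subtypeVal.isPreconnected_image]
    rwa [hCval]
  have hB' : IsPreconnected (H.symm '' C') := hC'.image _ H.symm.continuous.continuousOn
  have hB : IsPreconnected (Subtype.val '' (H.symm '' C') : Set E2) :=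
    hB'.image _ continuous_subtype_val.continuousOn
  have heq : (Subtype.val '' (H.symm '' C') : Set E2) = S ∩ f ⁻¹' C := by
    ext x
    constructor
    · rintro ⟨x', ⟨z, hz, rfl⟩, rfl⟩
      refine ⟨(H.symm z).2, ?_⟩
      have : H (H.symm z) = z := H.apply_symm_apply z
      have hfx : f ↑(H.symm z) = ↑z := congrArg Subtype.val this
      show f ↑(H.symm z) ∈ C
      rw [hfx]
      exact hz
    · rintro ⟨hxS, hxC⟩
      refine ⟨⟨x, hxS⟩, ⟨H ⟨x, hxS⟩, ?_, H.symm_apply_apply _⟩, rfl⟩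
      show ((H ⟨x, hxS⟩ : J) : Pt) ∈ C
      exact hxC
  rwa [heq] at hB

lemma same_comp {F S : Set Pt} (hS : IsPreconnected S) (hSF : S ⊆ F) {x y : Pt}
    (hx : x ∈ S) (hy : y ∈ S) : connectedComponentIn F x = connectedComponentIn F y := by
  have h1 : S ⊆ connectedComponentIn F x := hS.subset_connectedComponentIn hx hSF
  exact connectedComponentIn_eq (h1 hy)

lemma path_crossing {p : ℝ → Pt} {a b : ℝ} (hab : a < b) {Ω : Set Pt}
    (hp : ContinuousOn p (Set.Icc a b)) (ha : p a ∈ Ω) (hb : p b ∈ Ω)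
    (hcomp : connectedComponentIn Ω (p a) ≠ connectedComponentIn Ω (p b)) :
    ∃ s ∈ Set.Ioo a b, p s ∉ Ω := by
  by_contra hcon
  push_neg at hcon
  have hsub : p '' Set.Icc a b ⊆ Ω := by
    rintro _ ⟨s, hs, rfl⟩
    rcases eq_or_lt_of_le hs.1 with h | h
    · rwa [← h]
    rcases eq_or_lt_of_le hs.2 with h2 | h2
    · rwa [h2]
    exact hcon s ⟨h, h2⟩
  exact hcomp (same_comp ((isPreconnected_Icc).image p hp) hsub
    ⟨a, ⟨le_refl a, le_of_lt hab⟩, rfl⟩ ⟨b, ⟨le_of_lt hab, le_refl b⟩, rfl⟩)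

-- the plane is not a union of finitely many lines

lemma exists_off_lines (L : Finset (Set Pt)) (hlines : ∀ l ∈ L, ∃ a b c : ℝ,
    (a ≠ 0 ∨ b ≠ 0) ∧ l = {p : Pt | a * p.1 + b * p.2 = c}) :
    ∃ p : Pt, p ∈ (⋃₀ (L : Set (Set Pt)))ᶜ := by
  classical
  by_contra hcon
  push_neg at hcon
  simp only [mem_compl_iff, not_not] at hcon
  have hmap : ∀ t : ℕ,
      ∃ l ∈ L, ((t : ℝ), (t : ℝ)^2) ∈ l := by
    intro t
    have := hcon ((t : ℝ), (t : ℝ)^2)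
    rw [mem_sUnion] at this
    obtain ⟨l, hl, hm⟩ := this
    exact ⟨l, hl, hm⟩
  choose g hg1 hg2 using hmap
  -- pigeonhole
  have hcard : L.card * 2 < (Finset.range (2 * L.card + 1)).card := by
    simp; omega
  obtain ⟨l, hl, hfib⟩ := Finset.exists_lt_card_fiber_of_mul_lt_card_of_maps_to
    (fun t _ => hg1 t) hcard
  rw [Finset.two_lt_card_iff] at hfib
  obtain ⟨t₁, t₂, t₃, h₁, h₂, h₃, h12, h13, h23⟩ := hfib
  simp only [Finset.mem_filter] at h₁ h₂ h₃
  obtain ⟨a, b, c, hab, hleq⟩ := hlines l hl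
  have hmem : ∀ t : ℕ, g t = l →
      a * t + b * (t:ℝ)^2 = c := by
    intro t hgt
    have := hg2 t
    rw [hgt, hleq] at this
    exact this
  have e1 := hmem t₁ h₁.2
  have e2 := hmem t₂ h₂.2
  have e3 := hmem t₃ h₃.2
  have ht12 : (t₁ : ℝ) ≠ t₂ := by exact_mod_cast h12
  have ht13 : (t₁ : ℝ) ≠ t₃ := by exact_mod_cast h13
  have ht23 : (t₂ : ℝ) ≠ t₃ := by exact_mod_cast h23
  have hb : b = 0 := by
    have k1 : a + b * ((t₁:ℝ) + t₂) = 0 := by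
      have := sub_eq_zero.mpr (e1.trans e2.symm)
      have h' : (a + b * ((t₁:ℝ) + t₂)) * ((t₁:ℝ) - t₂) = 0 := by ring_nf; ring_nf at this; linarith
      rcases mul_eq_zero.mp h' with h | h
      · exact h
      · exact absurd (sub_eq_zero.mp h) ht12
    have k2 : a + b * ((t₁:ℝ) + t₃) = 0 := by
      have := sub_eq_zero.mpr (e1.trans e3.symm)
      have h' : (a + b * ((t₁:ℝ) + t₃)) * ((t₁:ℝ) - t₃) = 0 := by ring_nf; ring_nf at this; linarith
      rcases mul_eq_zero.mp h' with h | h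
      · exact h
      · exact absurd (sub_eq_zero.mp h) ht13
    have : b * ((t₂:ℝ) - t₃) = 0 := by linarith
    rcases mul_eq_zero.mp this with h | h
    · exact h
    · exact absurd (sub_eq_zero.mp h) ht23
  have ha : a = 0 := by
    have k1 : a + b * ((t₁:ℝ) + t₂) = 0 := by
      have := sub_eq_zero.mpr (e1.trans e2.symm)
      have h' : (a + b * ((t₁:ℝ) + t₂)) * ((t₁:ℝ) - t₂) = 0 := by ring_nf; ring_nf at this; linarith
      rcases mul_eq_zero.mp h' with h | h
      · exact h
      · exact absurd (sub_eq_zero.mp h) ht12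
    rw [hb] at k1; linarith
  rcases hab with h | h
  · exact h ha
  · exact h hb

lemma qc_arg {v : E2} (hv : v ∈ Metric.sphere (0:E2) 1) : qc (Complex.arg (Zc v)) = v := by
  apply Zc_inj
  rw [Zc_qc]
  conv_rhs => rw [← Complex.norm_mul_exp_arg_mul_I (Zc v)]
  rw [abs_Zc hv]
  simp

lemma qc_add_two_pi (θ : ℝ) : qc (θ + 2 * Real.pi) = qc θ := by
  ext i
  simp only [qc]
  rw [Real.cos_add_two_pi, Real.sin_add_two_pi]

lemma key_claim (X : Finset Pt) (L : Finset (Set Pt)) (K d : ℕ) (hd : 1 ≤ d) (hK : 1 ≤ K)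
    (hL : L.card = K) (hlines : ∀ l ∈ L, IsAffLine l ∧ Disjoint l (↑X : Set Pt))
    (J : Set Pt) (hJ : IsJordanCurve J) (hstab : StabLE J d)
    (y : Fin (K * d + 1) → Pt) (hyX : ∀ i, y i ∈ (↑X : Set Pt)) (hyJ : ∀ i, y i ∈ J)
    (hdist : ∀ i j, i ≠ j → connectedComponentIn (⋃₀ (L : Set (Set Pt)))ᶜ (y i) ≠
      connectedComponentIn (⋃₀ (L : Set (Set Pt)))ᶜ (y j)) : False := by
  classical
  have hn1 : 1 ≤ K * d := Nat.one_le_iff_ne_zero.mpr (by positivity)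
  set Ω := (⋃₀ (L : Set (Set Pt)))ᶜ with hΩ
  have hXΩ : ∀ p : Pt, p ∈ (↑X : Set Pt) → p ∈ Ω := by
    intro p hp
    rw [hΩ, mem_compl_iff, mem_sUnion]
    rintro ⟨l, hl, hpl⟩
    exact Set.disjoint_left.mp (hlines l hl).2 hpl hp
  obtain ⟨f, hfc, hfi, hJeq⟩ := hJ
  -- preimages on the circle
  have hpre : ∀ i, ∃ u ∈ Metric.sphere (0:E2) 1, f u = y i := by
    intro i
    have := hyJ i
    rw [hJeq] at this
    obtain ⟨u, hu, hfu⟩ := this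
    exact ⟨u, hu, hfu⟩
  choose u hu hfu using hpre
  set θ : Fin (K * d + 1) → ℝ := fun i => Complex.arg (Zc (u i)) with hθ
  have hqθ : ∀ i, qc (θ i) = u i := fun i => qc_arg (hu i)
  have hθlb : ∀ i, -Real.pi < θ i := fun i => Complex.neg_pi_lt_arg _
  have hθub : ∀ i, θ i ≤ Real.pi := fun i => Complex.arg_le_pi _
  have hyinj : Function.Injective y := by
    intro i j hij
    by_contra hne
    exact hdist i j hne (by rw [hij])
  have hθinj : Function.Injective θ := by
    intro i j hij
    apply hyinj
    rw [← hfu i, ← hfu j, ← hqθ i, ← hqθ j, hij]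
  -- sort
  set Θ : Finset ℝ := Finset.image θ Finset.univ with hΘ
  have hΘcard : Θ.card = K * d + 1 := by
    rw [hΘ, Finset.card_image_of_injective _ hθinj, Finset.card_univ, Fintype.card_fin]
  set σ := Θ.orderIsoOfFin hΘcard with hσ
  set φ : Fin (K * d + 1) → ℝ := fun k => (σ k : ℝ) with hφ
  have hφmono : StrictMono φ := fun a b hab => by
    exact_mod_cast σ.strictMono hab
  have hφmem : ∀ k, ∃ i, θ i = φ k := by
    intro k
    obtain ⟨i, _, hi⟩ := Finset.mem_image.mp ((σ k).2)
    exact ⟨i, hi⟩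
  choose ι hι using hφmem
  have hιinj : Function.Injective ι := by
    intro k k' hkk
    have : φ k = φ k' := by rw [← hι k, ← hι k', hkk]
    exact σ.injective (Subtype.ext this)
  set w : Fin (K * d + 1) → Pt := fun k => y (ι k) with hwdef
  have hfqφ : ∀ k, f (qc (φ k)) = w k := by
    intro k
    rw [← hι k, hqθ, hfu]
  have hwX : ∀ k, w k ∈ (↑X : Set Pt) := fun k => hyX (ι k)
  have hwΩ : ∀ k, w k ∈ Ω := fun k => hXΩ _ (hwX k)
  have hwdist : ∀ k k', k ≠ k' → connectedComponentIn Ω (w k) ≠ connectedComponentIn Ω (w k') :=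
    fun k k' hkk => hdist (ι k) (ι k') (fun h => hkk (hιinj h))
  have hφlb : ∀ k, -Real.pi < φ k := fun k => by rw [← hι k]; exact hθlb _
  have hφub : ∀ k, φ k ≤ Real.pi := fun k => by rw [← hι k]; exact hθub _
  -- successor structure
  set b : Fin (K * d + 1) → ℝ := fun k =>
    if h : (k : ℕ) < K * d then φ ⟨(k : ℕ) + 1, by omega⟩ else φ 0 + 2 * Real.pi with hb
  set nxt : Fin (K * d + 1) → Fin (K * d + 1) := fun k =>
    if h : (k : ℕ) < K * d then ⟨(k : ℕ) + 1, by omega⟩ else 0 with hnxt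
  have hφb : ∀ k, φ k < b k := by
    intro k
    simp only [hb]
    by_cases h : (k : ℕ) < K * d
    · rw [dif_pos h]
      exact hφmono (by simp [Fin.lt_def])
    · rw [dif_neg h]
      have := hφub k
      have := hφlb 0
      have := Real.pi_pos
      linarith
  have hfqb : ∀ k, f (qc (b k)) = w (nxt k) := by
    intro k
    simp only [hb, hnxt]
    by_cases h : (k : ℕ) < K * d
    · rw [dif_pos h, dif_pos h, hfqφ]
    · rw [dif_neg h, dif_neg h, qc_add_two_pi, hfqφ]
  have hknxt : ∀ k, k ≠ nxt k := by
    intro k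
    simp only [hnxt]
    by_cases h : (k : ℕ) < K * d
    · rw [dif_pos h]
      intro hcon
      have := congrArg Fin.val hcon
      simp at this
    · rw [dif_neg h]
      intro hcon
      have := congrArg Fin.val hcon
      simp at this
      have h0 : ((0 : Fin (K * d + 1)) : ℕ) = 0 := rfl
      omega
  have hbub : ∀ k, b k ≤ φ 0 + 2 * Real.pi := by
    intro k
    simp only [hb]
    by_cases h : (k : ℕ) < K * d
    · rw [dif_pos h]
      have := hφub ⟨(k : ℕ) + 1, by omega⟩
      have := hφlb 0
      have := Real.pi_pos
      linarith
    · rw [dif_neg h]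
  -- crossings
  have hcross : ∀ k, ∃ s ∈ Set.Ioo (φ k) (b k), f (qc s) ∈ ⋃₀ (L : Set (Set Pt)) := by
    intro k
    have hcont : ContinuousOn (fun t => f (qc t)) (Set.Icc (φ k) (b k)) := by
      apply hfc.comp qc_cont.continuousOn
      intro t _
      exact qc_mem_sphere t
    have ha : f (qc (φ k)) ∈ Ω := by rw [hfqφ]; exact hwΩ k
    have hbm : f (qc (b k)) ∈ Ω := by rw [hfqb]; exact hwΩ _
    have hcomp : connectedComponentIn Ω (f (qc (φ k))) ≠
        connectedComponentIn Ω (f (qc (b k))) := by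
      rw [hfqφ, hfqb]
      exact hwdist k (nxt k) (hknxt k)
    obtain ⟨s, hs, hsn⟩ := path_crossing (hφb k) hcont ha hbm hcomp
    exact ⟨s, hs, by rwa [hΩ, mem_compl_iff, not_not] at hsn⟩
  choose s hsIoo hsMem using hcross
  have hlsel : ∀ k, ∃ l ∈ L, f (qc (s k)) ∈ l := by
    intro k
    obtain ⟨l, hl, hm⟩ := hsMem k
    exact ⟨l, hl, hm⟩
  choose lk hlkL hlkMem using hlsel
  -- pigeonhole over lines
  have hpig : L.card * d < (Finset.univ : Finset (Fin (K * d + 1))).card := by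
    rw [hL, Finset.card_univ, Fintype.card_fin]
    omega
  obtain ⟨l₀, hl₀L, hfib⟩ := Finset.exists_lt_card_fiber_of_mul_lt_card_of_maps_to
    (fun k _ => hlkL k) hpig
  obtain ⟨G, hGsub, hGcard⟩ := Finset.exists_subset_card_eq (Nat.succ_le_of_lt hfib)
  set e := G.orderIsoOfFin hGcard with he
  set g : Fin (d + 1) → Fin (K * d + 1) := fun i => (e i : Fin (K * d + 1)) with hg
  have hgmono : StrictMono g := fun a b' hab => by
    exact_mod_cast e.strictMono hab
  have hgl : ∀ i, lk (g i) = l₀ := by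
    intro i
    have : (e i : Fin (K * d + 1)) ∈ G := (e i).2
    have := hGsub this
    simp only [Finset.mem_filter] at this
    exact this.2
  -- the d+1 crossing points on l₀
  have hl₀line : IsAffLine l₀ := (hlines l₀ hl₀L).1
  have hl₀disj : Disjoint l₀ (↑X : Set Pt) := (hlines l₀ hl₀L).2
  have hxmem : ∀ i : Fin (d + 1), f (qc (s (g i))) ∈ J ∩ l₀ := by
    intro i
    constructor
    · rw [hJeq]
      exact ⟨qc (s (g i)), qc_mem_sphere _, rfl⟩
    · rw [← hgl i]
      exact hlkMem (g i)
  obtain ⟨i, j, hij, hcomp⟩ := hstab l₀ hl₀line (fun i => f (qc (s (g i)))) hxmem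
  -- WLOG processing
  have main : ∀ i j : Fin (d + 1), g i < g j →
      connectedComponentIn (J ∩ l₀) (f (qc (s (g i)))) =
      connectedComponentIn (J ∩ l₀) (f (qc (s (g j)))) → False := by
    clear hij hcomp i j
    intro i j hglt hcomp
    set k₁ := g i with hk₁
    set k₂ := g j with hk₂
    set C := connectedComponentIn (J ∩ l₀) (f (qc (s k₁))) with hC
    have hCpre : IsPreconnected C := isPreconnected_connectedComponentIn
    have hCsub : C ⊆ J ∩ l₀ := connectedComponentIn_subset _ _
    have hx₁C : f (qc (s k₁)) ∈ C := mem_connectedComponentIn (hxmem i)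
    have hx₂C : f (qc (s k₂)) ∈ C := by
      rw [hcomp]
      exact mem_connectedComponentIn (hxmem j)
    have hCJ : C ⊆ f '' (Metric.sphere (0:E2) 1) := by
      intro z hz
      rw [← hJeq]
      exact (hCsub hz).1
    set B := Metric.sphere (0:E2) 1 ∩ f ⁻¹' C with hB'
    have hBpre : IsPreconnected B := jordan_preimage hfc hfi hCpre hCJ
    have hBs : B ⊆ Metric.sphere (0:E2) 1 := Set.inter_subset_left
    have hmem₁ : qc (s k₁) ∈ B := ⟨qc_mem_sphere _, hx₁C⟩
    have hmem₂ : qc (s k₂) ∈ B := ⟨qc_mem_sphere _, hx₂C⟩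
    have hnotB : ∀ m, qc (φ m) ∉ B := by
      intro m hm
      have : f (qc (φ m)) ∈ C := hm.2
      have hl : f (qc (φ m)) ∈ l₀ := (hCsub this).2
      rw [hfqφ] at hl
      exact Set.disjoint_left.mp hl₀disj hl (hwX m)
    -- inequalities
    have hk₁n : (k₁ : ℕ) < K * d := by
      have h1 : (k₁ : ℕ) < (k₂ : ℕ) := hglt
      have h2 : (k₂ : ℕ) ≤ K * d := Nat.lt_succ_iff.mp k₂.2
      omega
    have hbk₁ : b k₁ ≤ φ k₂ := by
      simp only [hb]
      rw [dif_pos hk₁n]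
      apply hφmono.monotone
      rw [Fin.le_def]
      exact hglt
    have hin1 := hsIoo k₁
    have hin2 := hsIoo k₂
    have h2' : s k₁ < φ k₂ := lt_of_lt_of_le hin1.2 hbk₁
    have h4' : s k₂ < φ k₁ + 2 * Real.pi := by
      have := hbub k₂
      have := hφmono.monotone (show (0 : Fin (K * d + 1)) ≤ k₁ from Fin.zero_le k₁)
      have := hin2.2
      simp only [hφ] at *
      linarith
    have := circle_sep hBpre hBs hin1.1 h2' hin2.1 h4' hmem₁ hmem₂ (hnotB k₁)
    exact hnotB k₂ this
  rcases lt_or_gt_of_ne hij with h | h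
  · exact main i j (hgmono h) hcomp
  · exact main j i (hgmono h) hcomp.symm


end Aux

/-- Proposition 4.1. -/
theorem stmt_7 (X Y : Finset Pt) (hYX : Y ⊆ X) (d K : ℕ)
    (hd : 1 ≤ d) (hK : 1 ≤ K) (J : Set Pt) (hJ : IsJordanCurve J)
    (hstab : StabLE J d) (hYJ : (↑Y : Set Pt) ⊆ J)
    (L : Finset (Set Pt)) (hL : L.card = K)
    (hlines : ∀ l ∈ L, IsAffLine l ∧ Disjoint l (↑X : Set Pt)) :
    ∃ cell, IsCell ↑L cell ∧
      (Y.card : ℝ) / (K * d) ≤ ((((↑X : Set Pt) ∩ cell).ncard : ℝ)) := by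
  classical
  set Ω := (⋃₀ (L : Set (Set Pt)))ᶜ with hΩ
  have hXΩ : ∀ p : Pt, p ∈ (↑X : Set Pt) → p ∈ Ω := by
    intro p hp
    rw [hΩ, mem_compl_iff, mem_sUnion]
    rintro ⟨l, hl, hpl⟩
    exact Set.disjoint_left.mp (hlines l hl).2 hpl hp
  rcases Finset.eq_empty_or_nonempty Y with hY | hYne
  · obtain ⟨p, hp⟩ := exists_off_lines L (fun l hl => (hlines l hl).1)
    refine ⟨connectedComponentIn Ω p, ⟨p, hp, rfl⟩, ?_⟩
    rw [hY]
    simp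
  · set cc : Pt → Set Pt := fun p => connectedComponentIn Ω p with hcc
    set T : Finset (Set Pt) := Y.image cc with hT
    have hTcard : T.card ≤ K * d := by
      by_contra hcon
      push_neg at hcon
      obtain ⟨G, hGsub, hGcard⟩ := Finset.exists_subset_card_eq (Nat.succ_le_of_lt hcon)
      set e := (Finset.equivFinOfCardEq hGcard).symm with he
      have hmem : ∀ i : Fin (K * d + 1), ∃ z ∈ Y, cc z = (e i : Set Pt) := by
        intro i
        have : (e i : Set Pt) ∈ T := hGsub (e i).2
        obtain ⟨z, hz, hz2⟩ := Finset.mem_image.mp this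
        exact ⟨z, hz, hz2⟩
      choose yy hyyY hyycc using hmem
      apply key_claim X L K d hd hK hL hlines J hJ hstab yy
        (fun i => hYX (hyyY i)) (fun i => hYJ (hyyY i))
      intro i j hij hcceq
      have : (e i : Set Pt) = (e j : Set Pt) := by
        rw [← hyycc i, ← hyycc j]
        exact hcceq
      exact hij (e.injective (Subtype.ext this))
    have hsum : Y.card = ∑ t ∈ T, (Y.filter (fun z => cc z = t)).card :=
      Finset.card_eq_sum_card_fiberwise (fun z hz => Finset.mem_image_of_mem cc hz)
    have hTne : T.Nonempty := Finset.image_nonempty.mpr hYne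
    obtain ⟨t₀, ht₀T, hmax⟩ := T.exists_max_image
      (fun t => (Y.filter (fun z => cc z = t)).card) hTne
    have hle1 : Y.card ≤ T.card * (Y.filter (fun z => cc z = t₀)).card := by
      rw [hsum]
      calc ∑ t ∈ T, (Y.filter (fun z => cc z = t)).card
          ≤ ∑ _t ∈ T, (Y.filter (fun z => cc z = t₀)).card :=
            Finset.sum_le_sum (fun t ht => hmax t ht)
        _ = T.card * (Y.filter (fun z => cc z = t₀)).card := by
            rw [Finset.sum_const, smul_eq_mul]
    have hle2 : Y.card ≤ K * d * (Y.filter (fun z => cc z = t₀)).card :=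
      le_trans hle1 (Nat.mul_le_mul_right _ hTcard)
    -- t₀ is a cell
    obtain ⟨y₀, hy₀Y, hy₀cc⟩ := Finset.mem_image.mp ht₀T
    have hy₀Ω : y₀ ∈ Ω := hXΩ y₀ (hYX hy₀Y)
    refine ⟨t₀, ⟨y₀, hy₀Ω, by rw [← hy₀cc]⟩, ?_⟩
    -- filter ⊆ X ∩ t₀
    have hsub : (↑(Y.filter (fun z => cc z = t₀)) : Set Pt) ⊆ (↑X : Set Pt) ∩ t₀ := by
      intro z hz
      rw [Finset.coe_filter] at hz
      obtain ⟨hzY, hzcc⟩ := hz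
      refine ⟨hYX hzY, ?_⟩
      rw [← hzcc]
      exact mem_connectedComponentIn (hXΩ z (hYX hzY))
    have hfin : ((↑X : Set Pt) ∩ t₀).Finite := X.finite_toSet.inter_of_left _
    have hle3 : (Y.filter (fun z => cc z = t₀)).card ≤ ((↑X : Set Pt) ∩ t₀).ncard := by
      rw [← Set.ncard_coe_finset]
      exact Set.ncard_le_ncard hsub hfin
    have hKd : (0 : ℝ) < (K : ℝ) * (d : ℝ) := by positivity
    rw [div_le_iff₀ hKd]
    have h1 : (Y.card : ℝ) ≤ (K : ℝ) * (d : ℝ) * ((Y.filter (fun z => cc z = t₀)).card : ℝ) := by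
      exact_mod_cast hle2
    have h2 : ((Y.filter (fun z => cc z = t₀)).card : ℝ) ≤ (((↑X : Set Pt) ∩ t₀).ncard : ℝ) :=
      Nat.cast_le.mpr hle3
    nlinarith
end

section
/- Let X be a finite set of N points in ℝ², let K ≥ 1 be an integer, and let L be a set of K affine lines in ℝ², each disjoint from X, such that every cell of L contains at most one point of X. Then for every real number d ≥ 1, if X is contained in a Jordan curve with stabbing number at most d, then d ≥ N/K. -/
open Set

noncomputable def cpx (p : EuclideanSpace ℝ (Fin 2)) : ℂ := ⟨p 0, p 1⟩

noncomputable def icx (w : ℂ) : EuclideanSpace ℝ (Fin 2) :=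
  (EuclideanSpace.equiv (Fin 2) ℝ).symm ![w.re, w.im]

lemma cpx_icx (w : ℂ) : cpx (icx w) = w := by
  simp only [cpx, icx, Complex.ext_iff]
  constructor <;> rfl

lemma icx_cpx (p : EuclideanSpace ℝ (Fin 2)) : icx (cpx p) = p := by
  ext i
  fin_cases i <;> rfl

lemma cpx_inj : Function.Injective cpx := by
  intro p q h
  rw [← icx_cpx p, ← icx_cpx q, h]

lemma abs_cpx (p : EuclideanSpace ℝ (Fin 2)) : ‖cpx p‖ = ‖p‖ := by
  rw [EuclideanSpace.norm_eq, Complex.norm_def, Complex.normSq_apply, Fin.sum_univ_two]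
  simp [cpx, Real.norm_eq_abs, sq_abs, sq]

lemma cpx_cont : Continuous cpx := by
  have h0 : Continuous fun p : EuclideanSpace ℝ (Fin 2) => p 0 :=
    (EuclideanSpace.proj (0 : Fin 2) : EuclideanSpace ℝ (Fin 2) →L[ℝ] ℝ).continuous
  have h1 : Continuous fun p : EuclideanSpace ℝ (Fin 2) => p 1 :=
    (EuclideanSpace.proj (1 : Fin 2) : EuclideanSpace ℝ (Fin 2) →L[ℝ] ℝ).continuous
  have : (cpx : _ → ℂ) = fun p => (p 0 : ℂ) + (p 1 : ℂ) * Complex.I := by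
    funext p; simp [cpx, Complex.ext_iff]
  rw [this]
  continuity

lemma icx_cont : Continuous icx := by
  refine ((EuclideanSpace.equiv (Fin 2) ℝ).symm.continuous).comp ?_
  refine continuous_pi fun i => ?_
  fin_cases i
  · exact Complex.continuous_re
  · exact Complex.continuous_im

lemma mem_sphere_iff_cpx (p : EuclideanSpace ℝ (Fin 2)) :
    p ∈ Metric.sphere (0 : EuclideanSpace ℝ (Fin 2)) 1 ↔ ‖cpx p‖ = 1 := by
  rw [mem_sphere_zero_iff_norm, abs_cpx]

lemma unit_eq_of_arg_eq {u v : ℂ} (hu : ‖u‖ = 1) (hv : ‖v‖ = 1)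
    (h : u.arg = v.arg) : u = v := by
  rw [← Complex.norm_mul_exp_arg_mul_I u, ← Complex.norm_mul_exp_arg_mul_I v, hu, hv, h]

lemma eq_neg_one_of_arg_pi {u : ℂ} (hu : ‖u‖ = 1) (h : u.arg = Real.pi) :
    u = -1 := by
  rw [← Complex.norm_mul_exp_arg_mul_I u, hu, h]
  simp [Complex.exp_pi_mul_I]

lemma mem_slitPlane_of_unit {u : ℂ} (hu : ‖u‖ = 1) (h : u ≠ -1) :
    u ∈ Complex.slitPlane := by
  rw [Complex.mem_slitPlane_iff]
  by_contra hc
  push_neg at hc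
  obtain ⟨h1, h2⟩ := hc
  apply h
  have : ‖u‖ = |u.re| := by
    rw [Complex.norm_def, Complex.normSq_apply, h2]
    rw [← Real.sqrt_sq_eq_abs]; ring_nf
  rw [this] at hu
  have : u.re = -1 := by cases abs_cases u.re <;> nlinarith
  apply Complex.ext <;> simp [this, h2]

lemma neg_div_cancel_eq {a b w : ℂ} (hw : w ≠ 0) (h : -a / w = -b / w) : a = b := by
  have h2 : -a / w * w = -b / w * w := by rw [h]
  rw [div_mul_cancel₀ _ hw, div_mul_cancel₀ _ hw] at h2
  exact neg_injective h2

lemma eq_of_neg_div_eq_neg_one {a w : ℂ} (hw : w ≠ 0) (h : -a / w = -1) : a = w := by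
  have h2 : -a / w * w = -1 * w := by rw [h]
  rw [div_mul_cancel₀ _ hw, neg_one_mul] at h2
  exact neg_injective h2

lemma arg_exp_self {s : ℝ} (hs : s ∈ Set.Ioc (-Real.pi) Real.pi) :
    (Complex.exp (s * Complex.I)).arg = s := by
  rw [Complex.arg_exp_mul_I]
  rw [toIocMod_eq_self]
  simpa [two_mul] using hs

lemma preconnected_preimage_of_compact_inj {α β : Type*} [TopologicalSpace α]
    [TopologicalSpace β] [T2Space β] {s : Set α} (hs : IsCompact s)
    {f : α → β} (hfc : ContinuousOn f s) (hfi : Set.InjOn f s)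
    {C : Set β} (hC : IsPreconnected C) (hCsub : C ⊆ f '' s) :
    IsPreconnected {q | q ∈ s ∧ f q ∈ C} := by
  haveI : CompactSpace s := isCompact_iff_compactSpace.mp hs
  set F : s → β := fun q => f q with hF
  have hFc : Continuous F := hfc.restrict
  have hFi : Function.Injective F := fun a b h => Subtype.ext (hfi a.2 b.2 h)
  have hemb : Topology.IsEmbedding F := (hFc.isClosedEmbedding hFi).isEmbedding
  have hrange : Set.range F = f '' s := by
    ext y; constructor
    · rintro ⟨⟨q, hq⟩, rfl⟩; exact ⟨q, hq, rfl⟩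
    · rintro ⟨q, hq, rfl⟩; exact ⟨⟨q, hq⟩, rfl⟩
  set h : s ≃ₜ Set.range F := hemb.toHomeomorph with hh
  have hCsub' : C ⊆ Set.range F := hrange ▸ hCsub
  set C' : Set (Set.range F) := Subtype.val ⁻¹' C with hC'
  have hC'pre : IsPreconnected C' := by
    rw [← Topology.IsInducing.subtypeVal.isPreconnected_image]
    have : Subtype.val '' C' = C := by
      rw [hC', Subtype.image_preimage_coe]
      exact Set.inter_eq_self_of_subset_right hCsub'
    rwa [this]
  have hS0 : IsPreconnected (h.symm '' C') := hC'pre.image _ h.symm.continuous.continuousOn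
  have hS : IsPreconnected (Subtype.val '' (h.symm '' C')) :=
    hS0.image _ continuous_subtype_val.continuousOn
  have hset : Subtype.val '' (h.symm '' C') = {q | q ∈ s ∧ f q ∈ C} := by
    ext q; constructor
    · rintro ⟨q0, hq0, rfl⟩
      obtain ⟨c', hc', rfl⟩ := hq0
      refine ⟨(h.symm c').2, ?_⟩
      have : F (h.symm c') = (c' : β) := by
        have := h.apply_symm_apply c'
        have h2 : (h (h.symm c') : β) = (c' : β) := by rw [this]
        exact h2
      have h3 : f ((h.symm c' : s) : α) = (c' : β) := this
      rw [h3]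
      exact hc'
    · rintro ⟨hq, hfq⟩
      refine ⟨⟨q, hq⟩, ⟨h ⟨q, hq⟩, ?_, h.symm_apply_apply _⟩, rfl⟩
      show ((h ⟨q, hq⟩ : Set.range F) : β) ∈ C
      have : (h ⟨q, hq⟩ : β) = F ⟨q, hq⟩ := rfl
      rw [this]
      exact hfq
  rwa [hset] at hS


set_option maxHeartbeats 2000000 in
/-- Remark after Lemma 4.3. -/
theorem stmt_9 (X : Finset Pt) (N : ℕ) (hN : X.card = N) (K : ℕ) (hK : 1 ≤ K)
    (L : Finset (Set Pt)) (hL : L.card = K)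
    (hlines : ∀ l ∈ L, IsAffLine l ∧ Disjoint l (↑X : Set Pt))
    (hcells : ∀ cell, IsCell ↑L cell → ((↑X : Set Pt) ∩ cell).ncard ≤ 1) :
    ∀ d : ℝ, 1 ≤ d →
      (∃ J, IsJordanCurve J ∧ (↑X : Set Pt) ⊆ J ∧ StabLER J d) →
      (N : ℝ) / K ≤ d := by
  classical
  rintro d hd ⟨J, ⟨f, hfc, hfi, hfJ⟩, hXJ, hstab⟩
  have hKpos : (0 : ℝ) < K := by exact_mod_cast hK
  have hfl1 : 1 ≤ ⌊d⌋₊ := Nat.le_floor (by exact_mod_cast hd)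
  rw [div_le_iff₀ hKpos]
  suffices hNK : N ≤ K * ⌊d⌋₊ by
    calc (N : ℝ) ≤ (K * ⌊d⌋₊ : ℕ) := by exact_mod_cast hNK
      _ = (⌊d⌋₊ : ℝ) * K := by push_cast; ring
      _ ≤ d * K := by
          have := Nat.floor_le (le_trans zero_le_one hd)
          nlinarith
  by_contra hlt
  push_neg at hlt
  -- setup
  set Sph := (Metric.sphere (0 : EuclideanSpace ℝ (Fin 2)) 1 : Set (EuclideanSpace ℝ (Fin 2)))
    with hSph
  have hXsub : (↑X : Set Pt) ⊆ f '' Sph := fun x hx => hfJ ▸ hXJ hx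
  have hex : ∀ x : Pt, ∃ q, x ∈ X → q ∈ Sph ∧ f q = x := by
    intro x
    by_cases hx : x ∈ X
    · obtain ⟨q, hq, hfq⟩ := hXsub hx
      exact ⟨q, fun _ => ⟨hq, hfq⟩⟩
    · exact ⟨0, fun h => absurd h hx⟩
  choose t ht using hex
  have hN2 : 2 ≤ N := by
    have := Nat.mul_le_mul hK hfl1
    omega
  set M := N - 1 with hMdef
  have hM : M + 1 = N := by omega
  have hM1 : 1 ≤ M := by omega
  obtain ⟨x₁, hx₁⟩ : ∃ x, x ∈ X := Finset.card_pos.mp (by omega) |>.exists_mem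
  set w₁ := cpx (t x₁) with hw₁def
  have habs1 : ‖w₁‖ = 1 := (mem_sphere_iff_cpx _).mp (ht x₁ hx₁).1
  have hw₁0 : w₁ ≠ 0 := by
    intro h; rw [h] at habs1; simp at habs1
  set θ : Pt → ℝ := fun x => (-(cpx (t x)) / w₁).arg with hθdef
  have habsu : ∀ x ∈ X, ‖-(cpx (t x)) / w₁‖ = 1 := by
    intro x hx
    rw [norm_div, norm_neg, habs1, (mem_sphere_iff_cpx _).mp (ht x hx).1, div_one]
  have htinj : ∀ x ∈ X, ∀ y ∈ X, t x = t y → x = y := by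
    intro x hx y hy h
    rw [← (ht x hx).2, ← (ht y hy).2, h]
  have hθlt : ∀ x ∈ X, x ≠ x₁ → θ x < Real.pi := by
    intro x hx hne
    rcases lt_or_eq_of_le (Complex.arg_le_pi (-(cpx (t x)) / w₁)) with h | h
    · exact h
    · exfalso
      have := eq_neg_one_of_arg_pi (habsu x hx) h
      exact hne (htinj x hx x₁ hx₁ (cpx_inj (eq_of_neg_div_eq_neg_one hw₁0 this)))
  have hθgt : ∀ x, -Real.pi < θ x := fun x => Complex.neg_pi_lt_arg _
  have hθinjX : ∀ x ∈ X, ∀ y ∈ X, θ x = θ y → x = y := by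
    intro x hx y hy h
    have := unit_eq_of_arg_eq (habsu x hx) (habsu y hy) h
    exact htinj x hx y hy (cpx_inj (neg_div_cancel_eq hw₁0 this))
  -- the sorted marked values
  set V : Finset ℝ := (X.erase x₁).image θ with hVdef
  have hVcard : V.card = M := by
    rw [hVdef, Finset.card_image_of_injOn, Finset.card_erase_of_mem hx₁, hN]
    intro x hx y hy h
    simp only [Finset.coe_erase, Set.mem_diff, Finset.mem_coe] at hx hy
    exact hθinjX x hx.1 y hy.1 h
  set v := V.orderIsoOfFin hVcard with hvdef
  have hVmem : ∀ r ∈ V, ∃ x ∈ X, x ≠ x₁ ∧ θ x = r := by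
    intro r hr
    obtain ⟨x, hx, hxr⟩ := Finset.mem_image.mp hr
    exact ⟨x, Finset.mem_of_mem_erase hx, Finset.ne_of_mem_erase hx, hxr⟩
  have hVrange : ∀ r ∈ V, -Real.pi < r ∧ r < Real.pi := by
    intro r hr
    obtain ⟨x, hx, hne, hxr⟩ := hVmem r hr
    exact ⟨hxr ▸ hθgt x, hxr ▸ hθlt x hx hne⟩
  set w : ℕ → ℝ := fun j =>
    if j = 0 then -Real.pi else if h : j ≤ M then (v ⟨j - 1, by omega⟩ : ℝ) else Real.pi
    with hwdef
  have hw0 : w 0 = -Real.pi := by simp [hwdef]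
  have hwtop : w (M + 1) = Real.pi := by simp [hwdef]
  have hwmemV : ∀ j, 1 ≤ j → j ≤ M → w j ∈ V := by
    intro j h1 h2
    simp only [hwdef]
    rw [if_neg (by omega), dif_pos h2]
    exact (v ⟨j - 1, by omega⟩).2
  have hwmono : ∀ j k, j < k → k ≤ M + 1 → w j < w k := by
    intro j k hjk hk
    rcases Nat.eq_zero_or_pos j with hj0 | hj1
    · subst hj0
      rw [hw0]
      rcases Nat.lt_or_ge k (M + 1) with hkM | hkM
      · exact (hVrange _ (hwmemV k (by omega) (by omega))).1
      · have : k = M + 1 := by omega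
        rw [this, hwtop]
        linarith [Real.pi_pos]
    · rcases Nat.lt_or_ge k (M + 1) with hkM | hkM
      · have hj : w j = (v ⟨j - 1, by omega⟩ : ℝ) := by
          simp only [hwdef]; rw [if_neg (by omega), dif_pos (by omega)]
        have hkk : w k = (v ⟨k - 1, by omega⟩ : ℝ) := by
          simp only [hwdef]; rw [if_neg (by omega), dif_pos (by omega)]
        rw [hj, hkk]
        exact_mod_cast v.lt_iff_lt.mpr (by simp [Fin.lt_def]; omega)
      · have : k = M + 1 := by omega
        rw [this, hwtop]
        exact (hVrange _ (hwmemV j (by omega) (by omega))).2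
  have hwlb : ∀ j, j ≤ M + 1 → -Real.pi ≤ w j := by
    intro j hj
    rcases Nat.eq_zero_or_pos j with h | h
    · subst h; rw [hw0]
    · exact le_of_lt (hw0 ▸ hwmono 0 j h hj)
  have hwub : ∀ j, j ≤ M + 1 → w j ≤ Real.pi := by
    intro j hj
    rcases Nat.lt_or_ge j (M + 1) with h | h
    · exact le_of_lt (hwtop ▸ hwmono j (M + 1) h le_rfl)
    · have : j = M + 1 := by omega
      rw [this, hwtop]
  -- the curve parametrization
  set Γ : ℝ → Pt := fun s => f (icx (-w₁ * Complex.exp (s * Complex.I))) with hΓdef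
  have hmemsph : ∀ s : ℝ, icx (-w₁ * Complex.exp (s * Complex.I)) ∈ Sph := by
    intro s
    rw [mem_sphere_iff_cpx, cpx_icx, norm_mul, norm_neg, habs1,
      Complex.norm_exp_ofReal_mul_I, one_mul]
  have hΓJ : ∀ s, Γ s ∈ J := fun s => hfJ ▸ ⟨_, hmemsph s, rfl⟩
  have hΓcont : Continuous Γ := by
    apply hfc.comp_continuous (icx_cont.comp _) hmemsph
    exact continuous_const.mul
      (Complex.continuous_exp.comp (Complex.continuous_ofReal.mul continuous_const))
  have hΓθ : ∀ x ∈ X, Γ (θ x) = x := by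
    intro x hx
    have h1 : Complex.exp ((θ x : ℝ) * Complex.I) = -(cpx (t x)) / w₁ := by
      have := Complex.norm_mul_exp_arg_mul_I (-(cpx (t x)) / w₁)
      rwa [habsu x hx, Complex.ofReal_one, one_mul] at this
    have h2 : -w₁ * Complex.exp ((θ x : ℝ) * Complex.I) = cpx (t x) := by
      rw [h1]; field_simp
    rw [hΓdef]
    simp only [h2, icx_cpx]
    exact (ht x hx).2
  have hΓtop : Γ Real.pi = x₁ := by
    have h2 : -w₁ * Complex.exp ((Real.pi : ℝ) * Complex.I) = cpx (t x₁) := by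
      rw [Complex.exp_pi_mul_I]; ring
    rw [hΓdef]
    simp only [h2, icx_cpx]
    exact (ht x₁ hx₁).2
  have hΓbot : Γ (-Real.pi) = x₁ := by
    have h2 : -w₁ * Complex.exp ((-Real.pi : ℝ) * Complex.I) = cpx (t x₁) := by
      have : ((-Real.pi : ℝ) : ℂ) * Complex.I = -(Real.pi * Complex.I) := by push_cast; ring
      rw [this, Complex.exp_neg, Complex.exp_pi_mul_I, inv_neg_one]
      linear_combination hw₁def
    rw [hΓdef]
    simp only [h2, icx_cpx]
    exact (ht x₁ hx₁).2
  have hargΓ : ∀ s ∈ Set.Ioo (-Real.pi) Real.pi,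
      (-(cpx (icx (-w₁ * Complex.exp (s * Complex.I)))) / w₁).arg = s := by
    intro s hs
    rw [cpx_icx]
    have : -(-w₁ * Complex.exp (s * Complex.I)) / w₁ = Complex.exp (s * Complex.I) := by
      field_simp
    rw [this]
    exact arg_exp_self ⟨hs.1, le_of_lt hs.2⟩
  -- endpoint values of gaps are points of X
  have hend : ∀ j, j ≤ M + 1 → ∃ x ∈ X, Γ (w j) = x ∧
      ((j = 0 ∨ j = M + 1) → x = x₁) ∧ (1 ≤ j → j ≤ M → x ≠ x₁) := by
    intro j hj
    rcases Nat.eq_zero_or_pos j with h0 | h1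
    · subst h0
      exact ⟨x₁, hx₁, hw0 ▸ hΓbot, fun _ => rfl, by omega⟩
    rcases Nat.lt_or_ge j (M + 1) with hjM | hjM
    · obtain ⟨x, hx, hne, hθx⟩ := hVmem _ (hwmemV j h1 (by omega))
      exact ⟨x, hx, by rw [← hθx, hΓθ x hx], by omega, fun _ _ => hne⟩
    · have : j = M + 1 := by omega
      subst this
      exact ⟨x₁, hx₁, hwtop ▸ hΓtop, fun _ => rfl, by omega⟩
  -- crossing in each gap
  have hXcompl : ∀ x ∈ X, x ∈ (⋃₀ (↑L : Set (Set Pt)))ᶜ := by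
    intro x hx hmem
    obtain ⟨l, hlL, hxl⟩ := hmem
    exact Set.disjoint_left.mp (hlines l hlL).2 hxl hx
  have hcross : ∀ i : ℕ, i ≤ M → ∃ s ∈ Set.Ioo (w i) (w (i + 1)), ∃ l ∈ L, Γ s ∈ l := by
    intro i hi
    obtain ⟨xa, hxa, hΓa, hxa0, hxa1⟩ := hend i (by omega)
    obtain ⟨xb, hxb, hΓb, hxb0, hxb1⟩ := hend (i + 1) (by omega)
    have hab : xa ≠ xb := by
      rcases Nat.eq_zero_or_pos i with h0 | h1
      · have hxx : xa = x₁ := hxa0 (by omega)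
        have : xb ≠ x₁ := hxb1 (by omega) (by omega)
        rw [hxx]; exact fun h => this h.symm
      rcases Nat.lt_or_ge (i + 1) (M + 1) with hiM | hiM
      · intro h
        obtain ⟨x, hx, hne, hθx⟩ := hVmem _ (hwmemV i (by omega) (by omega))
        obtain ⟨x', hx', hne', hθx'⟩ := hVmem _ (hwmemV (i + 1) (by omega) (by omega))
        have hwne : w i ≠ w (i + 1) := ne_of_lt (hwmono i (i + 1) (by omega) (by omega))
        apply hwne
        have e1 : x = xa := by rw [← hΓθ x hx, hθx, hΓa]
        have e2 : x' = xb := by rw [← hΓθ x' hx', hθx', hΓb]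
        rw [← hθx, ← hθx', e1, e2, h]
      · have : xb = x₁ := hxb0 (by omega)
        rw [this]
        exact hxa1 h1 (by omega)
    have hab' : w i < w (i + 1) := hwmono i (i + 1) (by omega) (by omega)
    have hA : IsPreconnected (Γ '' Set.Icc (w i) (w (i + 1))) :=
      isPreconnected_Icc.image Γ hΓcont.continuousOn
    have hexists : ∃ s ∈ Set.Icc (w i) (w (i + 1)), Γ s ∈ ⋃₀ (↑L : Set (Set Pt)) := by
      by_contra hno
      push_neg at hno
      have hsub : Γ '' Set.Icc (w i) (w (i + 1)) ⊆ (⋃₀ (↑L : Set (Set Pt)))ᶜ := by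
        rintro p ⟨s, hs, rfl⟩
        exact hno s hs
      have hmema : Γ (w i) ∈ Γ '' Set.Icc (w i) (w (i + 1)) :=
        ⟨w i, ⟨le_rfl, le_of_lt hab'⟩, rfl⟩
      have hmemb : Γ (w (i + 1)) ∈ Γ '' Set.Icc (w i) (w (i + 1)) :=
        ⟨w (i + 1), ⟨le_of_lt hab', le_rfl⟩, rfl⟩
      have hcompsub := hA.subset_connectedComponentIn hmema hsub
      have hcell : IsCell ↑L (connectedComponentIn (⋃₀ (↑L : Set (Set Pt)))ᶜ (Γ (w i))) :=
        ⟨Γ (w i), hΓa ▸ hXcompl xa hxa, rfl⟩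
      have hle := hcells _ hcell
      have h2 : 1 < ((↑X : Set Pt) ∩ connectedComponentIn (⋃₀ (↑L : Set (Set Pt)))ᶜ
          (Γ (w i))).ncard := by
        rw [Set.one_lt_ncard (X.finite_toSet.inter_of_left _)]
        refine ⟨xa, ⟨hxa, ?_⟩, xb, ⟨hxb, ?_⟩, hab⟩
        · rw [← hΓa]
          exact mem_connectedComponentIn (hΓa ▸ hXcompl xa hxa)
        · rw [← hΓb]
          exact hcompsub hmemb
      omega
    obtain ⟨s, hs, hsl⟩ := hexists
    obtain ⟨l, hlL, hsl'⟩ := hsl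
    have hsX : Γ s ∉ (↑X : Set Pt) := fun hmem =>
      Set.disjoint_left.mp (hlines l hlL).2 hsl' hmem
    have hsa : s ≠ w i := fun h => hsX (by rw [h, hΓa]; exact hxa)
    have hsb : s ≠ w (i + 1) := fun h => hsX (by rw [h, hΓb]; exact hxb)
    exact ⟨s, ⟨lt_of_le_of_ne hs.1 (Ne.symm hsa), lt_of_le_of_ne hs.2 hsb⟩, l, hlL, hsl'⟩
  choose σ hσIoo lf hlfL hσl using fun i : Fin (M + 1) => hcross i (by omega : (i : ℕ) ≤ M)
  -- pigeonhole
  have hcard : L.card * ⌊d⌋₊ < (Finset.univ : Finset (Fin (M + 1))).card := by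
    rw [Finset.card_univ, Fintype.card_fin, hL, hM]
    exact hlt
  obtain ⟨l₀, hl₀L, hfib⟩ := Finset.exists_lt_card_fiber_of_mul_lt_card_of_maps_to
    (fun i _ => hlfL i) hcard
  obtain ⟨T, hTsub, hTcard⟩ := Finset.exists_subset_card_eq (show ⌊d⌋₊ + 1 ≤ _ from hfib)
  set e := T.orderIsoOfFin hTcard with hedef
  have hTl : ∀ k, lf ((e k : { x // x ∈ T }) : Fin (M + 1)) = l₀ := by
    intro k
    have := hTsub (e k).2
    exact (Finset.mem_filter.mp this).2
  set P : Fin (⌊d⌋₊ + 1) → Pt := fun k => Γ (σ ((e k : { x // x ∈ T }) : Fin (M + 1)))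
    with hPdef
  have hPmem : ∀ k, P k ∈ J ∩ l₀ := by
    intro k
    exact ⟨hΓJ _, hTl k ▸ hσl _⟩
  obtain ⟨k, k', hkk', hcomp⟩ := hstab l₀ (hlines l₀ hl₀L).1 P hPmem
  -- distinct gaps have distinct components
  have hσrange : ∀ i : Fin (M + 1), σ i ∈ Set.Ioo (-Real.pi) Real.pi := by
    intro i
    obtain ⟨h1, h2⟩ := hσIoo i
    exact ⟨lt_of_le_of_lt (hwlb i (by omega)) h1,
      lt_of_lt_of_le h2 (hwub ((i : ℕ) + 1) (by omega))⟩
  have hfinal : ∀ i j : Fin (M + 1), (i : ℕ) < (j : ℕ) → Γ (σ i) ∈ l₀ → Γ (σ j) ∈ l₀ →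
      connectedComponentIn (J ∩ l₀) (Γ (σ i)) ≠ connectedComponentIn (J ∩ l₀) (Γ (σ j)) := by
    intro i j hij hi hj heq
    set C := connectedComponentIn (J ∩ l₀) (Γ (σ i)) with hCdef
    have hPi : Γ (σ i) ∈ J ∩ l₀ := ⟨hΓJ _, hi⟩
    have hPj : Γ (σ j) ∈ J ∩ l₀ := ⟨hΓJ _, hj⟩
    have hCpre : IsPreconnected C := (isConnected_connectedComponentIn_iff.mpr hPi).isPreconnected
    have hCsub : C ⊆ J ∩ l₀ := connectedComponentIn_subset _ _
    have hmi : Γ (σ i) ∈ C := mem_connectedComponentIn hPi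
    have hmj : Γ (σ j) ∈ C := heq ▸ mem_connectedComponentIn hPj
    have hCX : ∀ x ∈ X, x ∉ C := fun x hx hxC =>
      Set.disjoint_left.mp (hlines l₀ hl₀L).2 (hCsub hxC).2 hx
    have hCJ : C ⊆ f '' Sph := fun p hp => hfJ ▸ (hCsub hp).1
    set S := {q | q ∈ Sph ∧ f q ∈ C} with hSdef
    have hSpre : IsPreconnected S :=
      preconnected_preimage_of_compact_inj (isCompact_sphere 0 1) hfc hfi hCpre hCJ
    set φ : EuclideanSpace ℝ (Fin 2) → ℝ := fun q => (-(cpx q) / w₁).arg with hφdef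
    have ht₁S : t x₁ ∉ S := fun h => hCX x₁ hx₁ ((ht x₁ hx₁).2 ▸ h.2)
    have hφc : ContinuousOn φ S := by
      intro q hq
      apply ContinuousAt.continuousWithinAt
      have habsq : ‖-(cpx q) / w₁‖ = 1 := by
        rw [norm_div, norm_neg, habs1, (mem_sphere_iff_cpx _).mp hq.1, div_one]
      have hne : -(cpx q) / w₁ ≠ -1 := by
        intro h
        have : q = t x₁ := cpx_inj (eq_of_neg_div_eq_neg_one hw₁0 h)
        exact ht₁S (this ▸ hq)
      have hin : ContinuousAt (fun q => -(cpx q) / w₁) q :=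
        ((cpx_cont.neg).div_const w₁).continuousAt
      exact ContinuousAt.comp (g := Complex.arg) (f := fun q => -(cpx q) / w₁) (x := q)
        (Complex.continuousAt_arg (mem_slitPlane_of_unit habsq hne)) hin
    have hord : Set.OrdConnected (φ '' S) := (hSpre.image φ hφc).ordConnected
    have hqS : ∀ i' : Fin (M + 1), Γ (σ i') ∈ C →
        icx (-w₁ * Complex.exp ((σ i' : ℝ) * Complex.I)) ∈ S := by
      intro i' hmem
      exact ⟨hmemsph _, hmem⟩
    have hφq : ∀ i' : Fin (M + 1),
        φ (icx (-w₁ * Complex.exp ((σ i' : ℝ) * Complex.I))) = σ i' :=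
      fun i' => hargΓ (σ i') (hσrange i')
    -- the marked value between
    have h1iM : 1 ≤ (i : ℕ) + 1 := by omega
    have hiM : (i : ℕ) + 1 ≤ M := by omega
    obtain ⟨xm, hxm, hnem, hθm⟩ := hVmem _ (hwmemV ((i : ℕ) + 1) h1iM hiM)
    have hbetween : w ((i : ℕ) + 1) ∈ Set.Icc (σ i) (σ j) := by
      constructor
      · exact le_of_lt (hσIoo i).2
      · rcases Nat.lt_or_ge ((i : ℕ) + 1) (j : ℕ) with h | h
        · exact le_of_lt (lt_trans (hwmono _ _ h (by omega)) (hσIoo j).1)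
        · have : (i : ℕ) + 1 = (j : ℕ) := by omega
          rw [this]
          exact le_of_lt (hσIoo j).1
    have hmemφ : w ((i : ℕ) + 1) ∈ φ '' S := by
      apply hord.out (Set.mem_image_of_mem φ (hqS i hmi)) (Set.mem_image_of_mem φ (hqS j hmj))
      rw [hφq i, hφq j]
      exact hbetween
    obtain ⟨r, hrS, hφr⟩ := hmemφ
    have habsr : ‖-(cpx r) / w₁‖ = 1 := by
      rw [norm_div, norm_neg, habs1, (mem_sphere_iff_cpx _).mp hrS.1, div_one]
    have hru : -(cpx r) / w₁ = -(cpx (t xm)) / w₁ := by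
      apply unit_eq_of_arg_eq habsr (habsu xm hxm)
      show φ r = θ xm
      rw [hφr, hθm]
    have hr : r = t xm := cpx_inj (neg_div_cancel_eq hw₁0 hru)
    have hfr : f (t xm) ∈ C := by rw [← hr]; exact hrS.2
    rw [(ht xm hxm).2] at hfr
    exact hCX xm hxm hfr
  -- conclude
  set i := ((e k : { x // x ∈ T }) : Fin (M + 1)) with hidef
  set j := ((e k' : { x // x ∈ T }) : Fin (M + 1)) with hjdef
  have hij : i ≠ j := by
    intro h
    exact hkk' (e.injective (Subtype.ext h))
  rcases Nat.lt_or_ge (i : ℕ) (j : ℕ) with h | h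
  · exact hfinal i j h (hTl k ▸ hσl i) (hTl k' ▸ hσl j) hcomp
  · have h' : (j : ℕ) < (i : ℕ) := by
      rcases Nat.lt_or_ge (j : ℕ) (i : ℕ) with h' | h'
      · exact h'
      · exact absurd (Fin.ext (by omega)) hij
    exact hfinal j i h' (hTl k' ▸ hσl j) (hTl k ▸ hσl i) hcomp.symm
end
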